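/- Let ℚ(v) be the field of rational functions over ℚ in an indeterminate v, with balanced quantum integers [m] = (v^m - v^{-m})/(v - v^{-1}) and quantum binomial coefficients [m choose p] = [m]!/([p]![m-p]!) where [m]! = ∏_{t=1}^{m}[t]. Then for every positive integer n: Σ_{p=0}^{n} (-1)^{p+1} [2n+1 choose p] [2(n-p)+1] = 0. -/

import Mathlib

/-- Balanced quantum integer `[m] = (v^m - v^{-m})/(v - v⁻¹)`. -/
noncomputable def qint {F : Type*} [Field F] (v : F) (m : ℤ) : F :=
  (v ^ m - v ^ (-m)) / (v - v⁻¹)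

/-- Quantum factorial `[m]! = ∏_{t=1}^m [t]`. -/
noncomputable def qfact {F : Type*} [Field F] (v : F) : ℕ → F
  | 0 => 1
  | m + 1 => qfact v m * qint v (m + 1)

/-- Quantum binomial coefficient `[m choose t] = [m]!/([t]![m-t]!)`. -/
noncomputable def qbinom {F : Type*} [Field F] (v : F) (m t : ℕ) : F :=
  qfact v m / (qfact v t * qfact v (m - t))

/-- The field ℚ(v) of rational functions over ℚ. -/
abbrev Kv : Type := RatFunc ℚ

/-- The indeterminate `v` of ℚ(v). -/
noncomputable def vv : Kv := RatFunc.X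

lemma hv0 : (vv : Kv) ≠ 0 := RatFunc.X_ne_zero

lemma hpow : ∀ k : ℕ, (vv:Kv) ^ k = 1 → k = 0 := by
  intro k h
  have : (Polynomial.X : Polynomial ℚ) ^ k = 1 := by
    apply RatFunc.algebraMap_injective ℚ
    simpa [vv, RatFunc.algebraMap_X, map_pow] using h
  have := congrArg Polynomial.natDegree this
  simpa using this

lemma hzpow_inj : ∀ {a b : ℤ}, (vv:Kv) ^ a = vv ^ b → a = b := by
  have key : ∀ {a b : ℤ}, a ≤ b → (vv:Kv)^a = vv^b → a = b := by
    intro a b hab h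
    have h2 : (vv:Kv) ^ (b - a) = 1 := by
      rw [zpow_sub₀ hv0, h, div_self (zpow_ne_zero _ hv0)]
    have h3 : b - a = ((b - a).toNat : ℤ) := by omega
    rw [h3, zpow_natCast] at h2
    have := hpow _ h2
    omega
  intro a b h
  rcases le_total a b with hab | hab
  · exact key hab h
  · exact (key hab h.symm).symm

lemma hsub : (vv:Kv) - vv⁻¹ ≠ 0 := by
  rw [sub_ne_zero]
  intro h
  have : (vv:Kv) ^ (1:ℤ) = vv ^ (-1:ℤ) := by simpa [zpow_one, zpow_neg] using h
  have := hzpow_inj this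
  omega

lemma qint_ne (k : ℤ) (hk : k ≠ 0) : qint vv k ≠ 0 := by
  unfold qint
  apply div_ne_zero _ hsub
  rw [sub_ne_zero]
  intro h
  have := hzpow_inj h
  omega

lemma qfact_ne (k : ℕ) : qfact vv k ≠ 0 := by
  induction k with
  | zero => simp [qfact]
  | succ m ih =>
    refine mul_ne_zero ih (qint_ne _ ?_)
    omega

lemma qbinom_zero (k : ℕ) : qbinom vv k 0 = 1 := by
  unfold qbinom
  simp [qfact, div_self (qfact_ne k)]

lemma qbinom_self (k : ℕ) : qbinom vv k k = 1 := by
  unfold qbinom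
  simp [qfact, div_self (qfact_ne k)]

lemma qint_add (a b : ℤ) : qint vv (a + b) = vv ^ a * qint vv b + vv ^ (-b) * qint vv a := by
  unfold qint
  rw [mul_div_assoc', mul_div_assoc', ← add_div]
  congr 1
  rw [mul_sub, mul_sub, ← zpow_add₀ hv0, ← zpow_add₀ hv0, ← zpow_add₀ hv0, ← zpow_add₀ hv0,
    show a + -b = -b + a from add_comm _ _, show -(a+b) = -b + -a by ring]
  ring

lemma pascal (a b : ℕ) : qbinom vv (a+b+2) (a+1)
    = vv^(-((a:ℤ)+1)) * qbinom vv (a+b+1) (a+1) + vv^((b:ℤ)+1) * qbinom vv (a+b+1) a := by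
  unfold qbinom
  rw [show a+b+2-(a+1) = b+1 by omega, show a+b+1-(a+1) = b by omega,
    show a+b+1-a = b+1 by omega,
    show qfact vv (a+b+2) = qfact vv (a+b+1) * qint vv ((b:ℤ)+1+((a:ℤ)+1)) by
      rw [show ((b:ℤ)+1+((a:ℤ)+1)) = ((a+b+1 : ℕ) : ℤ) + 1 by push_cast; ring]; rfl,
    qint_add]
  rw [show qfact vv (a+1) = qfact vv a * qint vv ((a:ℤ)+1) from rfl,
    show qfact vv (b+1) = qfact vv b * qint vv ((b:ℤ)+1) from rfl]
  have h1 := qfact_ne a; have h2 := qfact_ne b; have h3 := qfact_ne (a+b+1)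
  have h4 := qint_ne ((a:ℤ)+1) (by omega); have h5 := qint_ne ((b:ℤ)+1) (by omega)
  field_simp
  ring

lemma znegpow (k : ℕ) : ((vv:Kv)^(-1:ℤ))^k = vv^(-(k:ℤ)) := by
  rw [← zpow_natCast (vv^(-1:ℤ)) k, ← zpow_mul]
  norm_num

lemma gauss (m : ℕ) (t : Kv) :
    ∑ p ∈ Finset.range (m+1), (-1:Kv)^p * qbinom vv m p * t^p
      = ∏ j ∈ Finset.range m, (1 - vv^(2*(j:ℤ)+1-(m:ℤ)) * t) := by
  induction m generalizing t with
  | zero => simp [qbinom_zero]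
  | succ m ih =>
    have key : ∑ p ∈ Finset.range (m+2), (-1:Kv)^p * qbinom vv (m+1) p * t^p
        = (1 - vv^(m:ℤ) * t) *
          ∑ p ∈ Finset.range (m+1), (-1:Kv)^p * qbinom vv m p * (vv^(-1:ℤ)*t)^p := by
      rw [sub_mul, one_mul, Finset.mul_sum, Finset.sum_range_succ
        (fun p => (-1:Kv)^p * qbinom vv (m+1) p * t^p),
        Finset.sum_range_succ' (fun p => (-1:Kv)^p * qbinom vv (m+1) p * t^p),
        Finset.sum_range_succ' (fun p => (-1:Kv)^p * qbinom vv m p * (vv^(-1:ℤ)*t)^p),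
        Finset.sum_range_succ
          (fun p => vv^(m:ℤ) * t * ((-1:Kv)^p * qbinom vv m p * (vv^(-1:ℤ)*t)^p))]
      have h0 : (-1:Kv)^0 * qbinom vv (m+1) 0 * t^0 = (-1:Kv)^0 * qbinom vv m 0 * (vv^(-1:ℤ)*t)^0 := by
        simp [qbinom_zero]
      have hlast : (-1:Kv)^(m+1) * qbinom vv (m+1) (m+1) * t^(m+1)
          = -(vv^(m:ℤ) * t * ((-1:Kv)^m * qbinom vv m m * (vv^(-1:ℤ)*t)^m)) := by
        rw [qbinom_self, qbinom_self, mul_pow, znegpow]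
        simp only [zpow_neg, zpow_natCast]
        field_simp
        have hone : (vv:Kv)^m * vv⁻¹^m = 1 := by
          rw [← mul_pow, mul_inv_cancel₀ hv0, one_pow]
        linear_combination (t*t^m*(-1:Kv)^m) * hone
      have hmid : ∀ p ∈ Finset.range m,
          (-1:Kv)^(p+1) * qbinom vv (m+1) (p+1) * t^(p+1)
          = (-1:Kv)^(p+1) * qbinom vv m (p+1) * (vv^(-1:ℤ)*t)^(p+1)
            - vv^(m:ℤ) * t * ((-1:Kv)^p * qbinom vv m p * (vv^(-1:ℤ)*t)^p) := by
        intro p hp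
        have hpm : p < m := Finset.mem_range.mp hp
        have hpas := pascal p (m-1-p)
        rw [show p+(m-1-p)+2 = m+1 by omega, show p+(m-1-p)+1 = m by omega,
          show ((m-1-p : ℕ):ℤ)+1 = (m:ℤ)-p by omega] at hpas
        rw [hpas, mul_pow, mul_pow, znegpow, znegpow]
        push_cast
        simp only [zpow_neg, zpow_sub₀ hv0, zpow_add₀ hv0, zpow_natCast, zpow_one]
        have := pow_ne_zero p hv0
        have := pow_ne_zero m hv0
        field_simp
        ring
      rw [Finset.sum_congr rfl hmid, Finset.sum_sub_distrib, h0, hlast]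
      ring
    rw [key, ih (vv^(-1:ℤ)*t), Finset.prod_range_succ]
    have hfac : ∀ j ∈ Finset.range m,
        (1 - vv^(2*(j:ℤ)+1-(m:ℤ)) * (vv^(-1:ℤ)*t)) = (1 - vv^(2*(j:ℤ)+1-((m:ℕ)+1:ℤ)) * t) := by
      intro j _
      rw [← mul_assoc, ← zpow_add₀ hv0]
      congr 2
      ring
    rw [Finset.prod_congr rfl hfac]
    have : (2*((m:ℕ):ℤ)+1-(((m:ℕ)+1):ℤ)) = (m:ℤ) := by ring
    push_cast
    rw [show 2*(m:ℤ)+1-((m:ℤ)+1) = (m:ℤ) by ring]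
    ring

lemma qint_neg (k : ℤ) : qint vv (-k) = - qint vv k := by
  unfold qint
  rw [neg_neg, ← neg_div]
  ring_nf

lemma neg_one_pow_eq (a b : ℕ) (h : a % 2 = b % 2) : (-1:Kv)^a = (-1)^b := by
  rw [← Nat.div_add_mod a 2, ← Nat.div_add_mod b 2, pow_add, pow_add, pow_mul, pow_mul]
  norm_num [h]

noncomputable def gg (n p : ℕ) : Kv :=
  (-1:Kv)^(p+1) * qbinom vv (2*n+1) p * qint vv (2*(n:ℤ)+1-2*(p:ℤ))

lemma gg_sym (n p : ℕ) (hp : p ≤ 2*n+1) : gg n p = gg n (2*n+1-p) := by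
  unfold gg
  rw [show (2*(n:ℤ)+1-2*((2*n+1-p:ℕ):ℤ)) = -(2*(n:ℤ)+1-2*(p:ℤ)) by omega, qint_neg,
    show qbinom vv (2*n+1) (2*n+1-p) = qbinom vv (2*n+1) p from by
      unfold qbinom; rw [show 2*n+1-(2*n+1-p) = p by omega]; ring,
    neg_one_pow_eq (2*n+1-p+1) (p+2) (by omega)]
  ring

lemma gz1 (n : ℕ) (hn : 0 < n) :
    ∑ p ∈ Finset.range (2*n+2), ((-1:Kv)^p * qbinom vv (2*n+1) p * (vv^(-2:ℤ))^p) = 0 := by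
  rw [show 2*n+2 = (2*n+1)+1 by ring, gauss]
  apply Finset.prod_eq_zero (i := n+1) (Finset.mem_range.mpr (by omega))
  rw [← zpow_add₀ hv0, show (2*((n+1:ℕ):ℤ)+1-((2*n+1:ℕ):ℤ) + -2) = 0 by push_cast; ring,
    zpow_zero, sub_self]

lemma gz2 (n : ℕ) (hn : 0 < n) :
    ∑ p ∈ Finset.range (2*n+2), ((-1:Kv)^p * qbinom vv (2*n+1) p * (vv^(2:ℤ))^p) = 0 := by
  rw [show 2*n+2 = (2*n+1)+1 by ring, gauss]
  apply Finset.prod_eq_zero (i := n-1) (Finset.mem_range.mpr (by omega))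
  rw [← zpow_add₀ hv0, show (2*((n-1:ℕ):ℤ)+1-((2*n+1:ℕ):ℤ) + 2) = 0 by omega,
    zpow_zero, sub_self]

lemma zp1 (p : ℕ) : ((vv:Kv)^(-2:ℤ))^p = vv^((-2)*(p:ℤ)) := by
  rw [← zpow_natCast (vv^(-2:ℤ)) p, ← zpow_mul]

lemma zp2 (p : ℕ) : ((vv:Kv)^(2:ℤ))^p = vv^(2*(p:ℤ)) := by
  rw [← zpow_natCast (vv^(2:ℤ)) p, ← zpow_mul]

lemma gg_term (n p : ℕ) : gg n p
    = (vv - vv⁻¹)⁻¹ *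
      (-(vv^(2*(n:ℤ)+1)) * ((-1:Kv)^p * qbinom vv (2*n+1) p * (vv^(-2:ℤ))^p)
        + vv^(-(2*(n:ℤ)+1)) * ((-1:Kv)^p * qbinom vv (2*n+1) p * (vv^(2:ℤ))^p)) := by
  unfold gg qint
  rw [zp1, zp2, show (2*(n:ℤ)+1-2*(p:ℤ)) = (2*(n:ℤ)+1) + (-2)*(p:ℤ) by ring]
  rw [zpow_add₀ hv0, show -((2*(n:ℤ)+1) + (-2)*(p:ℤ)) = -(2*(n:ℤ)+1) + 2*(p:ℤ) by ring,
    zpow_add₀ hv0]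
  field_simp
  rw [zpow_add₀ hv0]
  ring

lemma Tzero (n : ℕ) (hn : 0 < n) : ∑ p ∈ Finset.range (2*n+2), gg n p = 0 := by
  calc ∑ p ∈ Finset.range (2*n+2), gg n p
      = ∑ p ∈ Finset.range (2*n+2), (vv - vv⁻¹)⁻¹ *
          (-(vv^(2*(n:ℤ)+1)) * ((-1:Kv)^p * qbinom vv (2*n+1) p * (vv^(-2:ℤ))^p)
            + vv^(-(2*(n:ℤ)+1)) * ((-1:Kv)^p * qbinom vv (2*n+1) p * (vv^(2:ℤ))^p)) :=
        Finset.sum_congr rfl (fun p _ => gg_term n p)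
    _ = (vv - vv⁻¹)⁻¹ *
          (-(vv^(2*(n:ℤ)+1)) * ∑ p ∈ Finset.range (2*n+2), ((-1:Kv)^p * qbinom vv (2*n+1) p * (vv^(-2:ℤ))^p)
            + vv^(-(2*(n:ℤ)+1)) * ∑ p ∈ Finset.range (2*n+2), ((-1:Kv)^p * qbinom vv (2*n+1) p * (vv^(2:ℤ))^p)) := by
        rw [← Finset.mul_sum, Finset.sum_add_distrib, ← Finset.mul_sum, ← Finset.mul_sum]
    _ = 0 := by rw [gz1 n hn, gz2 n hn]; ring


/-- For every positive integer n,
`Σ_{p=0}^{n} (-1)^{p+1} [2n+1 choose p] [2(n-p)+1] = 0` in ℚ(v). -/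
theorem stmt8 (n : ℕ) (hn : 0 < n) :
    ∑ p ∈ Finset.range (n + 1),
        (-1 : Kv) ^ (p + 1) * qbinom vv (2 * n + 1) p * qint vv (2 * ((n : ℤ) - p) + 1) = 0 := by
  have hS : ∑ p ∈ Finset.range (n + 1),
      (-1 : Kv) ^ (p + 1) * qbinom vv (2 * n + 1) p * qint vv (2 * ((n : ℤ) - p) + 1)
      = ∑ p ∈ Finset.range (n+1), gg n p := by
    refine Finset.sum_congr rfl (fun p _ => ?_)
    unfold gg
    rw [show (2*((n:ℤ)-(p:ℤ))+1) = 2*(n:ℤ)+1-2*(p:ℤ) by ring]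
  rw [hS]
  have hsplit : ∑ p ∈ Finset.range (2*n+2), gg n p
      = ∑ p ∈ Finset.range (n+1), gg n p + ∑ p ∈ Finset.Ico (n+1) (2*n+2), gg n p := by
    rw [Finset.range_eq_Ico, ← Finset.sum_Ico_consecutive _ (Nat.zero_le (n+1)) (by omega),
      ← Finset.range_eq_Ico]
  have hrefl : ∑ p ∈ Finset.Ico (n+1) (2*n+2), gg n p = ∑ p ∈ Finset.range (n+1), gg n p := by
    refine Finset.sum_nbij' (fun p => 2*n+1-p) (fun p => 2*n+1-p) ?_ ?_ ?_ ?_ ?_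
    · intro a ha
      simp only [Finset.mem_Ico] at ha
      exact Finset.mem_range.mpr (by omega)
    · intro a ha
      simp only [Finset.mem_range] at ha
      simp only [Finset.mem_Ico]
      omega
    · intro a ha
      simp only [Finset.mem_Ico] at ha
      omega
    · intro a ha
      simp only [Finset.mem_range] at ha
      omega
    · intro a ha
      simp only [Finset.mem_Ico] at ha
      exact gg_sym n a (by omega)
  have hT := Tzero n hn
  rw [hsplit, hrefl] at hT
  have h2 : (2:Kv) ≠ 0 := by
    have h : algebraMap (Polynomial ℚ) Kv 2 ≠ 0 := RatFunc.algebraMap_ne_zero (by norm_num)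
    rwa [map_ofNat] at h
  have : (2:Kv) * ∑ p ∈ Finset.range (n+1), gg n p = 0 := by rw [two_mul]; exact hT
  exact (mul_eq_zero.mp this).resolve_left h2
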